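/- arXiv:1802.09060 — 3 statements merged into one kernel-verified Lean document; each statement's English description precedes it below -/
import Mathlib

section
/- Let C and D be sites such that the topology on D is generated by a pretopology, and let u : C ⥤ D be a functor which is (i) fully faithful, (ii) both continuous and cocontinuous for the given topologies, and (iii) cover-dense, i.e. every object V of D admits a covering family of the form {u(U_i) → V}_{i ∈ I} with each U_i an object of C. Then the morphism of topoi g : Sh(C) → Sh(D) induced by the cocontinuous functor u — whose direct image g_* is the pushforward of presheaves along u (which preserves sheaves) and whose inverse image g^* is the restriction functor G ↦ G ∘ u (which preserves sheaves since u is continuous) — is an equivalence of topoi; in particular g^* and g_* are quasi-inverse equivalences between the categories of sheaves of sets Sh(D) and Sh(C). -/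
open CategoryTheory Limits

section Aux

variable {C D : Type u} [SmallCategory C] [SmallCategory D]
  (J : GrothendieckTopology C) (K : GrothendieckTopology D) (u : C ⥤ D)

/-- A continuous functor is cover-preserving: the pushforward of a covering sieve
is covering.  This is proven by testing against the sheaf of closed sieves. -/
lemma coverPreserving_of_isContinuous_aux [Functor.IsContinuous.{u} u J K]
    {X : C} {S : Sieve X} (hS : S ∈ J X) : S.functorPushforward u ∈ K (u.obj X) := by
  -- The presheaf of `K`-closed sieves is a `K`-sheaf.
  have hF : Presieve.IsSheaf K (Functor.closedSieves K).toFunctor := classifier_isSheaf K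
  -- By continuity, its restriction along `u` is a `J`-sheaf.
  have hFu : Presieve.IsSheaf J (u.op ⋙ (Functor.closedSieves K).toFunctor) :=
    u.op_comp_isSheaf_of_types J K ⟨_, (isSheaf_iff_isSheaf_of_type _ _).2 hF⟩
  -- Compare the top closed sieve with the closure of the pushforward of `S`.
  have h : (⟨⊤, fun _ _ _ => trivial⟩ : { T : Sieve (u.obj X) // K.IsClosed T }) =
      ⟨K.close (S.functorPushforward u), K.close_isClosed _⟩ := by
    apply (hFu S hS).isSeparatedFor.ext
    intro Y f hf
    dsimp [Functor.closedSieves]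
    apply Subtype.ext
    change Sieve.pullback (u.map f) ⊤ = Sieve.pullback (u.map f) (K.close (S.functorPushforward u))
    rw [← K.pullback_close]
    have : (S.functorPushforward u).pullback (u.map f) = ⊤ := by
      rw [← Sieve.id_mem_iff_eq_top]
      exact ⟨Y, f, 𝟙 _, hf, by simp⟩
    rw [this]
    symm
    rw [Sieve.pullback_top, ← Sieve.id_mem_iff_eq_top]
    exact K.le_close ⊤ _ trivial
  rw [← K.close_eq_top_iff_mem]
  exact (congrArg Subtype.val h).symm

lemma isDenseSubsite_aux [u.Full] [u.Faithful] [Functor.IsContinuous.{u} u J K]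
    [u.IsCocontinuous J K] [u.IsCoverDense K] : u.IsDenseSubsite J K where
  functorPushforward_mem_iff {X} {S} := by
    constructor
    · intro hS
      have := u.cover_lift J K hS
      rwa [(Sieve.fullyFaithfulFunctorGaloisCoinsertion u X).u_l_eq S] at this
    · exact coverPreserving_of_isContinuous_aux J K u

end Aux

/--
Let `C` and `D` be sites such that the topology on `D` is generated by a pretopology,
and let `u : C ⥤ D` be a functor which is fully faithful, continuous, cocontinuous and
cover-dense.  Then the morphism of topoi `g : Sh(C) → Sh(D)` induced by the cocontinuous
functor `u` — with `g_* = u.sheafPushforwardCocontinuous` the pushforward along `u` and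
`g^* = u.sheafPushforwardContinuous` the restriction along `u` — is an equivalence of
topoi: `g^*` and `g_*` are quasi-inverse equivalences of the categories of sheaves of
sets.
-/
theorem stmt0 {C D : Type u} [SmallCategory C] [SmallCategory D] [HasPullbacks D]
    (J : GrothendieckTopology C) (P : Pretopology D)
    (u : C ⥤ D) [u.Full] [u.Faithful]
    [u.IsContinuous J (Pretopology.toGrothendieck P)]
    [u.IsCocontinuous J (Pretopology.toGrothendieck P)]
    [u.IsCoverDense (Pretopology.toGrothendieck P)] :
    ∃ e : Sheaf (Pretopology.toGrothendieck P) (Type u) ≌ Sheaf J (Type u),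
      e.functor = u.sheafPushforwardContinuous (Type u) J (Pretopology.toGrothendieck P) ∧
      e.inverse = u.sheafPushforwardCocontinuous (Type u) J (Pretopology.toGrothendieck P) := by
  have := isDenseSubsite_aux J (Pretopology.toGrothendieck P) u
  have hadj := u.sheafAdjunctionCocontinuous (Type u) J (Pretopology.toGrothendieck P)
  exact ⟨hadj.toEquivalence,
    rfl, rfl⟩
end

section
/- Let C and D be categories each equipped with a pretopology, and let u : C ⥤ D be a functor satisfying: (a) u preserves fiber products (pullbacks); (b) a family of morphisms {f_i : T_i → T}_{i ∈ I} in C is a covering family for the pretopology of C if and only if {u(f_i) : u(T_i) → u(T)}_{i ∈ I} is a covering family for the pretopology of D; and (c) for every object T of C and every morphism g : Z → u(T) in D, there exists a morphism h : T' → T in C and an isomorphism Z ≅ u(T') in D whose composition with u(h) equals g. Then u is both continuous and cocontinuous for the Grothendieck topologies generated by the two pretopologies. -/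
open CategoryTheory Limits

/-- The image of a family of morphisms `{f_i : T_i → T}` (a presieve `S` on `T`) under a
functor `u : C ⥤ D`: the family `{u(f_i) : u(T_i) → u(T)}` of morphisms with target
`u(T)`. -/
def imageFamily {C D : Type*} [Category C] [Category D] (u : C ⥤ D) {T : C}
    (S : Presieve T) : Presieve (u.obj T) :=
  fun Z g => ∃ (W : C) (f : W ⟶ T), S f ∧ ∃ h : Z = u.obj W, g = eqToHom h ≫ u.map f

/--
Let `C` and `D` be categories each equipped with a pretopology, and `u : C ⥤ D` a
functor such that: (a) `u` preserves fiber products; (b) a family `{f_i : T_i → T}` is a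
covering family in `C` iff `{u(f_i) : u(T_i) → u(T)}` is a covering family in `D`; and
(c) every morphism `g : Z → u(T)` of `D` factors as an isomorphism `Z ≅ u(T')` followed
by `u(h)` for some morphism `h : T' → T` of `C`.  Then `u` is continuous and
cocontinuous for the Grothendieck topologies generated by the two pretopologies.
-/
theorem stmt1 {C D : Type u} [SmallCategory C] [SmallCategory D]
    [HasPullbacks C] [HasPullbacks D]
    (KC : Pretopology C) (KD : Pretopology D) (u : C ⥤ D)
    [PreservesLimitsOfShape WalkingCospan u]
    (hcov : ∀ (T : C) (S : Presieve T), S ∈ KC T ↔ imageFamily u S ∈ KD (u.obj T))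
    (hfact : ∀ (T : C) (Z : D) (g : Z ⟶ u.obj T),
      ∃ (T' : C) (h : T' ⟶ T) (e : Z ≅ u.obj T'), e.hom ≫ u.map h = g) :
    u.IsContinuous (Pretopology.toGrothendieck KC) (Pretopology.toGrothendieck KD) ∧
    u.IsCocontinuous (Pretopology.toGrothendieck KC) (Pretopology.toGrothendieck KD) := by
  constructor
  · -- continuity
    have hcomp : CompatiblePreserving (Pretopology.toGrothendieck KD) u := by
      constructor
      intro ℱ Z T x hx Y₁ Y₂ X f₁ f₂ g₁ g₂ hg₁ hg₂ e
      obtain ⟨k, hk₁, hk₂⟩ :=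
        PullbackCone.IsLimit.lift' (isLimitOfHasPullbackOfPreservesLimit u g₁ g₂) f₁ f₂ e
      have hk₁' : k ≫ u.map (pullback.fst g₁ g₂) = f₁ := hk₁
      have hk₂' : k ≫ u.map (pullback.snd g₁ g₂) = f₂ := hk₂
      have hcompat : ℱ.val.map (u.map (pullback.fst g₁ g₂)).op (x g₁ hg₁) =
          ℱ.val.map (u.map (pullback.snd g₁ g₂)).op (x g₂ hg₂) :=
        hx (pullback.fst g₁ g₂) (pullback.snd g₁ g₂) hg₁ hg₂ pullback.condition
      calc ℱ.val.map f₁.op (x g₁ hg₁)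
          = ℱ.val.map (k ≫ u.map (pullback.fst g₁ g₂)).op (x g₁ hg₁) := by rw [hk₁']
        _ = ℱ.val.map k.op (ℱ.val.map (u.map (pullback.fst g₁ g₂)).op (x g₁ hg₁)) := by
            exact FunctorToTypes.map_comp_apply ℱ.val (u.map (pullback.fst g₁ g₂)).op k.op _
        _ = ℱ.val.map k.op (ℱ.val.map (u.map (pullback.snd g₁ g₂)).op (x g₂ hg₂)) := by
            rw [hcompat]
        _ = ℱ.val.map (k ≫ u.map (pullback.snd g₁ g₂)).op (x g₂ hg₂) := by
            exact (FunctorToTypes.map_comp_apply ℱ.val (u.map (pullback.snd g₁ g₂)).op k.op _).symm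
        _ = ℱ.val.map f₂.op (x g₂ hg₂) := by rw [hk₂']
    have hcp : CoverPreserving (Pretopology.toGrothendieck KC)
        (Pretopology.toGrothendieck KD) u := by
      constructor
      intro U S hS
      obtain ⟨R, hR, hRS⟩ := hS
      refine ⟨imageFamily u R, (hcov U R).1 hR, ?_⟩
      rintro X a ⟨W, f, hf, h, rfl⟩
      exact ⟨W, f, eqToHom h, hRS _ _ hf, rfl⟩
    exact Functor.isContinuous_of_coverPreserving hcomp hcp
  · -- cocontinuity
    constructor
    intro U S hS
    obtain ⟨R, hR, hRS⟩ := hS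
    choose T' hm e he using hfact U
    -- the candidate presieve on U
    set Q : Presieve U := fun W f =>
      ∃ (Z : D) (g : Z ⟶ u.obj U) (_ : R g) (hW : W = T' Z g),
        f = eqToHom hW ≫ hm Z g with hQ
    have himg : imageFamily u Q =
        R.bind (fun Z g _ => Presieve.singleton (e Z g).inv) := by
      funext X
      ext a
      constructor
      · rintro ⟨W, f, ⟨Z, g, hg, hW, rfl⟩, h, rfl⟩
        subst hW
        subst h
        have : u.map (hm Z g) = (e Z g).inv ≫ g := by
          rw [Iso.eq_inv_comp]; exact he Z g
        refine ⟨Z, (e Z g).inv, g, hg, Presieve.singleton.mk, ?_⟩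
        simp [this]
      · rintro ⟨Z, gg, g, hg, hsing, rfl⟩
        cases hsing
        have : u.map (hm Z g) = (e Z g).inv ≫ g := by
          rw [Iso.eq_inv_comp]; exact he Z g
        exact ⟨T' Z g, hm Z g, ⟨Z, g, hg, rfl, by simp⟩, rfl, by simp [this]⟩
    have hQmem : Q ∈ KC U := by
      rw [hcov U Q, himg]
      exact KD.transitive _ _ hR fun Z g hg => KD.has_isos (e Z g).inv
    refine ⟨Q, hQmem, ?_⟩
    rintro W f ⟨Z, g, hg, hW, rfl⟩
    subst hW
    show S (u.map (eqToHom rfl ≫ hm Z g))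
    have : u.map (eqToHom rfl ≫ hm Z g) = (e Z g).inv ≫ g := by
      simp [← he Z g]
    rw [this]
    exact S.downward_closed (hRS _ _ hg) _
end

section
/- Let C be a category admitting fiber products, W a class of morphisms of C admitting a right calculus of fractions, and Q : C → C[W⁻¹] the localization functor. Then the localized category C[W⁻¹] admits fiber products, and Q preserves fiber products (the image under Q of a pullback square in C is a pullback square in C[W⁻¹]). -/
open CategoryTheory Limits

section Aux

variable {C : Type*} {D : Type*} [Category C] [Category D]
  (L : C ⥤ D) (W : MorphismProperty C) [L.IsLocalization W]
  [W.HasRightCalculusOfFractions]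

/-- Ore: two `W`-morphisms into the same object can be refined to a common denominator. -/
lemma aux_ore {A B T : C} (s : A ⟶ T) (t : B ⟶ T) (ht : W t) :
    ∃ (E : C) (u : E ⟶ A) (v : E ⟶ B), W u ∧ u ≫ s = v ≫ t := by
  obtain ⟨ψ, hψ⟩ := (MorphismProperty.LeftFraction.mk s t ht :
    W.LeftFraction A B).exists_rightFraction
  exact ⟨ψ.X', ψ.s, ψ.f, ψ.hs, hψ⟩

variable [HasPullbacks C]

include W in
lemma aux_exists_lift {X Y Z : C} (f : X ⟶ Z) (g : Y ⟶ Z) (T : C)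
    (a : L.obj T ⟶ L.obj X) (b : L.obj T ⟶ L.obj Y)
    (h : a ≫ L.map f = b ≫ L.map g) :
    ∃ (l : L.obj T ⟶ L.obj (pullback f g)),
      l ≫ L.map (pullback.fst f g) = a ∧ l ≫ L.map (pullback.snd f g) = b := by
  obtain ⟨φ, rfl⟩ := Localization.exists_rightFraction L W a
  obtain ⟨ψ, rfl⟩ := Localization.exists_rightFraction L W b
  obtain ⟨E, u, v, hu, huv⟩ := aux_ore W φ.s ψ.s ψ.hs
  have hσ : W (u ≫ φ.s) := W.comp_mem _ _ hu φ.hs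
  have hσ' := Localization.inverts L W _ hσ
  have ha : L.map (u ≫ φ.s) ≫ φ.map L (Localization.inverts L W) = L.map (u ≫ φ.f) := by
    rw [L.map_comp u φ.s, L.map_comp u φ.f, Category.assoc,
      MorphismProperty.RightFraction.map_s_comp_map]
  have hb : L.map (u ≫ φ.s) ≫ ψ.map L (Localization.inverts L W) = L.map (v ≫ ψ.f) := by
    rw [huv, L.map_comp v ψ.s, L.map_comp v ψ.f, Category.assoc,
      MorphismProperty.RightFraction.map_s_comp_map]
  have key : L.map ((u ≫ φ.f) ≫ f) = L.map ((v ≫ ψ.f) ≫ g) := by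
    rw [L.map_comp (u ≫ φ.f) f, L.map_comp (v ≫ ψ.f) g, ← ha, ← hb,
      Category.assoc, Category.assoc, h]
  rw [MorphismProperty.map_eq_iff_precomp L W] at key
  obtain ⟨E', w, hw, hwfac⟩ := key
  have hσ2 : W (w ≫ u ≫ φ.s) := W.comp_mem _ _ hw hσ
  have hσ2' := Localization.inverts L W _ hσ2
  refine ⟨inv (L.map (w ≫ u ≫ φ.s)) ≫
    L.map (pullback.lift (w ≫ u ≫ φ.f) (w ≫ v ≫ ψ.f)
      (by simpa only [Category.assoc] using hwfac)), ?_, ?_⟩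
  · rw [Category.assoc, ← L.map_comp, pullback.lift_fst, IsIso.inv_comp_eq]
    rw [L.map_comp w (u ≫ φ.s), Category.assoc, ha, ← L.map_comp]
  · rw [Category.assoc, ← L.map_comp, pullback.lift_snd, IsIso.inv_comp_eq]
    rw [L.map_comp w (u ≫ φ.s), Category.assoc, hb, ← L.map_comp]

include W in
lemma aux_hom_ext {X Y Z : C} (f : X ⟶ Z) (g : Y ⟶ Z) (T : C)
    (l₁ l₂ : L.obj T ⟶ L.obj (pullback f g))
    (h₁ : l₁ ≫ L.map (pullback.fst f g) = l₂ ≫ L.map (pullback.fst f g))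
    (h₂ : l₁ ≫ L.map (pullback.snd f g) = l₂ ≫ L.map (pullback.snd f g)) :
    l₁ = l₂ := by
  obtain ⟨φ, rfl⟩ := Localization.exists_rightFraction L W l₁
  obtain ⟨ψ, rfl⟩ := Localization.exists_rightFraction L W l₂
  obtain ⟨E, u, v, hu, huv⟩ := aux_ore W φ.s ψ.s ψ.hs
  have hσ : W (u ≫ φ.s) := W.comp_mem _ _ hu φ.hs
  have hσ' := Localization.inverts L W _ hσ
  have ha : L.map (u ≫ φ.s) ≫ φ.map L (Localization.inverts L W) = L.map (u ≫ φ.f) := by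
    rw [L.map_comp u φ.s, L.map_comp u φ.f, Category.assoc,
      MorphismProperty.RightFraction.map_s_comp_map]
  have hb : L.map (u ≫ φ.s) ≫ ψ.map L (Localization.inverts L W) = L.map (v ≫ ψ.f) := by
    rw [huv, L.map_comp v ψ.s, L.map_comp v ψ.f, Category.assoc,
      MorphismProperty.RightFraction.map_s_comp_map]
  have e₁ : L.map ((u ≫ φ.f) ≫ pullback.fst f g) = L.map ((v ≫ ψ.f) ≫ pullback.fst f g) := by
    rw [L.map_comp (u ≫ φ.f), L.map_comp (v ≫ ψ.f), ← ha, ← hb,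
      Category.assoc, Category.assoc, h₁]
  have e₂ : L.map ((u ≫ φ.f) ≫ pullback.snd f g) = L.map ((v ≫ ψ.f) ≫ pullback.snd f g) := by
    rw [L.map_comp (u ≫ φ.f), L.map_comp (v ≫ ψ.f), ← ha, ← hb,
      Category.assoc, Category.assoc, h₂]
  rw [MorphismProperty.map_eq_iff_precomp L W] at e₁ e₂
  obtain ⟨E₁, w₁, hw₁, hfac₁⟩ := e₁
  obtain ⟨E₂, w₂, hw₂, hfac₂⟩ := e₂
  obtain ⟨F, x, y, hx, hxy⟩ := aux_ore W w₁ w₂ hw₂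
  have hρ : W (x ≫ w₁) := W.comp_mem _ _ hx hw₁
  have heq : (x ≫ w₁) ≫ u ≫ φ.f = (x ≫ w₁) ≫ v ≫ ψ.f := by
    apply pullback.hom_ext
    · simpa only [Category.assoc] using x ≫= hfac₁
    · rw [hxy]
      simpa only [Category.assoc] using y ≫= hfac₂
  have hmap : L.map (u ≫ φ.f) = L.map (v ≫ ψ.f) := by
    have := Localization.inverts L W _ hρ
    rw [← cancel_epi (L.map (x ≫ w₁)), ← L.map_comp, ← L.map_comp, heq]
  rw [← cancel_epi (L.map (u ≫ φ.s)), ha, hb, hmap]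

include W in
/-- `L` maps the pullback cone of `f` and `g` to a limit pullback cone. -/
noncomputable def auxIsLimit {X Y Z : C} (f : X ⟶ Z) (g : Y ⟶ Z) :
    IsLimit (PullbackCone.mk (L.map (pullback.fst f g)) (L.map (pullback.snd f g))
      (by rw [← L.map_comp, ← L.map_comp, pullback.condition]) :
      PullbackCone (L.map f) (L.map g)) := by
  have : L.EssSurj := Localization.essSurj L W
  have hcond : ∀ (s : PullbackCone (L.map f) (L.map g)),
      ((L.objObjPreimageIso s.pt).hom ≫ s.fst) ≫ L.map f =
        ((L.objObjPreimageIso s.pt).hom ≫ s.snd) ≫ L.map g := fun s => by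
    rw [Category.assoc, Category.assoc, s.condition]
  exact PullbackCone.IsLimit.mk _
    (fun s => (L.objObjPreimageIso s.pt).inv ≫
      (aux_exists_lift L W f g _ _ _ (hcond s)).choose)
    (fun s => by
      rw [Category.assoc,
        (aux_exists_lift L W f g _ _ _ (hcond s)).choose_spec.1, Iso.inv_hom_id_assoc])
    (fun s => by
      rw [Category.assoc,
        (aux_exists_lift L W f g _ _ _ (hcond s)).choose_spec.2, Iso.inv_hom_id_assoc])
    (fun s m hm₁ hm₂ => by
      rw [← cancel_epi (L.objObjPreimageIso s.pt).hom, Iso.hom_inv_id_assoc]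
      exact aux_hom_ext L W f g _ _ _
        (by rw [Category.assoc, hm₁, (aux_exists_lift L W f g _ _ _ (hcond s)).choose_spec.1])
        (by rw [Category.assoc, hm₂,
          (aux_exists_lift L W f g _ _ _ (hcond s)).choose_spec.2]))

include W in
lemma aux_preservesLimit {X Y Z : C} (f : X ⟶ Z) (g : Y ⟶ Z) :
    PreservesLimit (cospan f g) L :=
  preservesLimit_of_preserves_limit_cone (pullbackIsPullback f g)
    ((isLimitMapConePullbackConeEquiv L pullback.condition).symm (auxIsLimit L W f g))

include W in
lemma aux_preservesLimitsOfShape : PreservesLimitsOfShape WalkingCospan L :=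
  ⟨fun {K} => by
    have := aux_preservesLimit L W (K.map WalkingCospan.Hom.inl)
      (K.map WalkingCospan.Hom.inr)
    exact preservesLimit_of_iso_diagram L (diagramIsoCospan K).symm⟩

include L W in
lemma aux_hasPullbacks : HasPullbacks D := by
  have : L.EssSurj := Localization.essSurj L W
  suffices h : ∀ {A B T : D} (f' : A ⟶ T) (g' : B ⟶ T), HasLimit (cospan f' g') by
    exact ⟨fun K => @hasLimit_of_iso _ _ _ _ (cospan _ _) K (h _ _) (diagramIsoCospan K).symm⟩
  intro A B T f' g'
  obtain ⟨φ, hφ⟩ := Localization.exists_rightFraction L W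
    ((L.objObjPreimageIso A).hom ≫ f' ≫ (L.objObjPreimageIso T).inv)
  obtain ⟨ψ, hψ⟩ := Localization.exists_rightFraction L W
    ((L.objObjPreimageIso B).hom ≫ g' ≫ (L.objObjPreimageIso T).inv)
  have := aux_preservesLimit L W φ.f ψ.f
  have h1 : HasLimit (cospan φ.f ψ.f ⋙ L) :=
    HasLimit.mk ⟨_, isLimitOfPreserves L (limit.isLimit (cospan φ.f ψ.f))⟩
  have h2 : HasLimit (cospan (L.map φ.f) (L.map ψ.f)) :=
    @hasLimit_of_iso _ _ _ _ _ _ h1 (cospanCompIso L φ.f ψ.f)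
  have hφ' := φ.map_s_comp_map L (Localization.inverts L W)
  rw [← hφ] at hφ'
  have hψ' := ψ.map_s_comp_map L (Localization.inverts L W)
  rw [← hψ] at hψ'
  refine @hasLimit_of_iso _ _ _ _ _ _ h2 (cospanExt
    (Localization.isoOfHom L W φ.s φ.hs ≪≫ L.objObjPreimageIso A)
    (Localization.isoOfHom L W ψ.s ψ.hs ≪≫ L.objObjPreimageIso B)
    (L.objObjPreimageIso T) ?_ ?_)
  · dsimp
    rw [← hφ', Category.assoc]
    simp
  · dsimp
    rw [← hψ', Category.assoc]
    simp

end Aux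

/--
Let `C` be a category admitting fiber products, `W` a class of morphisms of `C`
admitting a right calculus of fractions, and `Q : C ⥤ C[W⁻¹]` the localization functor.
Then the localized category `C[W⁻¹]` admits fiber products, and `Q` preserves fiber
products (the image under `Q` of a pullback square in `C` is a pullback square in
`C[W⁻¹]`).
-/
theorem stmt7 {C : Type u} [Category.{v} C] [HasPullbacks C]
    (W : MorphismProperty C) [W.HasRightCalculusOfFractions] :
    HasPullbacks W.Localization ∧ PreservesLimitsOfShape WalkingCospan W.Q := by
  exact ⟨aux_hasPullbacks W.Q W, aux_preservesLimitsOfShape W.Q W⟩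
end
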